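/- Fix n and j ≥ 2, and for j+1 ≤ k ≤ n let f_j(k) be the maximum number of edges of a j-erasable graph on n vertices having exactly n−k non-isolated vertices. Then: (1) f_j(k) = C(k,2) for k ≤ j+2; and (2) for k ≥ j+3, f_j(k) ≤ 1 + max over k_1, k_2 with j+1 ≤ k_1, k_2 ≤ k−1 and k_1 + k_2 = k + j of (f_j(k_1) + f_j(k_2)). -/

import Mathlib

open SimpleGraph
/-- One `j`-erase step: delete an edge `e` which is the unique edge between two
disjoint vertex sets `V₁`, `V₂` covering all but `j` vertices (when the graph has
exactly `j+1` vertices, any edge may be deleted). -/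
def JEraseStep (j : ℕ) {V : Type*} (G G' : SimpleGraph V) : Prop :=
  ∃ e ∈ G.edgeSet, G'.edgeSet = G.edgeSet \ {e} ∧
    (Nat.card V = j + 1 ∨
      ∃ V1 V2 : Set V, Disjoint V1 V2 ∧ V1.ncard + V2.ncard + j = Nat.card V ∧
        (∃ x ∈ V1, ∃ y ∈ V2, e = s(x, y)) ∧
        ∀ x ∈ V1, ∀ y ∈ V2, G.Adj x y → s(x, y) = e)

/-- `G` is `j`-erasable: some sequence of `j`-erase steps empties its edge set. -/
def JErasable (j : ℕ) {V : Type*} (G : SimpleGraph V) : Prop :=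
  ∃ (m : ℕ) (c : ℕ → SimpleGraph V), c 0 = G ∧ c m = ⊥ ∧
    ∀ i < m, JEraseStep j (c i) (c (i + 1))

/-- `f_j(k)`: the maximum number of edges of a `j`-erasable graph on `n` vertices
with exactly `k` non-isolated vertices (i.e. `n − k` isolated vertices). -/
noncomputable def maxJErasableEdges (j n k : ℕ) : ℕ :=
  sSup {m | ∃ G : SimpleGraph (Fin n), JErasable j G ∧
    {v : Fin n | ∃ w, G.Adj v w}.ncard = k ∧ G.edgeSet.ncard = m}

lemma jerasable_bot {j : ℕ} {V : Type*} : JErasable j (⊥ : SimpleGraph V) :=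
  ⟨0, fun _ => ⊥, rfl, rfl, fun i hi => absurd hi (by omega)⟩

lemma jerasable_cons {V : Type*} {j : ℕ} {G G' : SimpleGraph V}
    (h : JEraseStep j G G') (h' : JErasable j G') : JErasable j G := by
  obtain ⟨m, c, hc0, hcm, hstep⟩ := h'
  refine ⟨m + 1, fun i => if i = 0 then G else c (i - 1), by simp, by simp [hcm], ?_⟩
  intro i hi
  rcases Nat.eq_zero_or_pos i with rfl | hpos
  · simpa [hc0] using h
  · have h1 : i ≠ 0 := hpos.ne'
    have h2 : i + 1 ≠ 0 := by omega
    simp only [h1, h2, if_false]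
    have h3 := hstep (i - 1) (by omega)
    rwa [show i - 1 + 1 = i + 1 - 1 by omega] at h3

lemma jerasable_of_le {V : Type*} {j : ℕ} :
    ∀ (m : ℕ) (G : SimpleGraph V) (c : ℕ → SimpleGraph V), c 0 = G → c m = ⊥ →
      (∀ i < m, JEraseStep j (c i) (c (i + 1))) →
      ∀ H : SimpleGraph V, H ≤ G → JErasable j H := by
  intro m
  induction m with
  | zero =>
    intro G c h0 hm _ H hH
    have hGbot : G = ⊥ := by rw [← h0, hm]
    have : H = ⊥ := le_bot_iff.mp (hGbot ▸ hH)
    exact this ▸ jerasable_bot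
  | succ m ih =>
    intro G c h0 hm hstep H hH
    obtain ⟨e, he, hE, hside⟩ := hstep 0 (Nat.succ_pos m)
    rw [h0] at he hside
    have tail0 : (fun i => c (i + 1)) 0 = c 1 := rfl
    have tailm : (fun i => c (i + 1)) m = ⊥ := hm
    have tailstep : ∀ i < m, JEraseStep j (c (i + 1)) (c (i + 1 + 1)) :=
      fun i hi => hstep (i + 1) (by omega)
    by_cases heH : e ∈ H.edgeSet
    · refine jerasable_cons (G' := H.deleteEdges {e}) ?_ ?_
      · refine ⟨e, heH, by simp [edgeSet_deleteEdges], ?_⟩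
        rcases hside with hcard | ⟨V1, V2, hd, hc, hxy, huniq⟩
        · exact Or.inl hcard
        · exact Or.inr ⟨V1, V2, hd, hc, hxy,
            fun x hx y hy hadj => huniq x hx y hy (hH hadj)⟩
      · refine ih (c 1) _ tail0 tailm tailstep _ ?_
        rw [← edgeSet_subset_edgeSet, edgeSet_deleteEdges, hE, h0]
        exact Set.diff_subset_diff_left (edgeSet_mono hH)
    · refine ih (c 1) _ tail0 tailm tailstep H ?_
      rw [← edgeSet_subset_edgeSet, hE, h0, Set.subset_diff]
      exact ⟨edgeSet_mono hH, Set.disjoint_singleton_right.mpr heH⟩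

lemma JErasable.mono {V : Type*} {j : ℕ} {G H : SimpleGraph V} (hH : H ≤ G)
    (hG : JErasable j G) : JErasable j H := by
  obtain ⟨m, c, h0, hm, hs⟩ := hG
  exact jerasable_of_le m G c h0 hm hs H hH

lemma edgeSet_ncard_comap {n : ℕ} (G : SimpleGraph (Fin n)) (S : Set (Fin n))
    (hs : G.support ⊆ S) :
    G.edgeSet.ncard = (G.comap (Subtype.val : S → Fin n)).edgeSet.ncard := by
  classical
  set H := G.comap (Subtype.val : S → Fin n) with hH
  have hmem : ∀ p : Sym2 S, p ∈ H.edgeSet → Sym2.map Subtype.val p ∈ G.edgeSet := by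
    intro p
    induction p using Sym2.ind with
    | _ a b => simp [Sym2.map_pair_eq, mem_edgeSet, hH]
  have hbij : Function.Bijective
      (fun p : H.edgeSet => (⟨Sym2.map Subtype.val p.1, hmem p.1 p.2⟩ : G.edgeSet)) := by
    constructor
    · intro p q h
      exact Subtype.ext (Sym2.map.injective Subtype.val_injective (congrArg Subtype.val h))
    · rintro ⟨p, hp⟩
      revert hp
      induction p using Sym2.ind with
      | _ a b =>
        intro hp
        have hab : G.Adj a b := (mem_edgeSet G).mp hp
        have ha : a ∈ S := hs ⟨b, hab⟩
        have hb : b ∈ S := hs ⟨a, hab.symm⟩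
        refine ⟨⟨s(⟨a, ha⟩, ⟨b, hb⟩), ?_⟩, ?_⟩
        · simpa [mem_edgeSet, hH] using hab
        · apply Subtype.ext
          simp [Sym2.map_pair_eq]
  rw [← Nat.card_coe_set_eq, ← Nat.card_coe_set_eq]
  exact (Nat.card_eq_of_bijective _ hbij).symm

lemma support_ncard_le {n : ℕ} (G : SimpleGraph (Fin n)) : G.support.ncard ≤ n := by
  have := Set.ncard_le_ncard (Set.subset_univ G.support) Set.finite_univ
  simpa [Set.ncard_univ] using this

lemma edge_bound {n : ℕ} (G : SimpleGraph (Fin n)) :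
    G.edgeSet.ncard ≤ G.support.ncard.choose 2 := by
  classical
  rw [edgeSet_ncard_comap G G.support subset_rfl]
  haveI : Fintype ↥G.support := Fintype.ofFinite _
  set H := G.comap (Subtype.val : G.support → Fin n)
  have h1 : H.edgeSet.ncard = H.edgeFinset.card := by
    simp [Set.ncard_eq_toFinset_card', edgeFinset]
  have h2 : (Fintype.card ↥G.support) = G.support.ncard := by
    rw [Set.ncard_eq_toFinset_card', Set.toFinset_card]
  rw [h1, ← h2]
  exact H.card_edgeFinset_le_card_choose_two

lemma edge_bound_n {n : ℕ} (G : SimpleGraph (Fin n)) : G.edgeSet.ncard ≤ n.choose 2 :=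
  le_trans (edge_bound G) (Nat.choose_le_choose 2 (support_ncard_le G))

def completeOn (n : ℕ) (S : Set (Fin n)) : SimpleGraph (Fin n) where
  Adj a b := a ≠ b ∧ a ∈ S ∧ b ∈ S
  symm := ⟨fun a b ⟨h, ha, hb⟩ => ⟨h.symm, hb, ha⟩⟩
  loopless := ⟨fun a ⟨h, _⟩ => h rfl⟩

lemma completeOn_support {n : ℕ} {S : Set (Fin n)} (h : 2 ≤ S.ncard) :
    (completeOn n S).support = S := by
  ext v
  constructor
  · rintro ⟨w, _, hv, _⟩; exact hv
  · intro hv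
    obtain ⟨w, hw, hwv⟩ := Set.exists_ne_of_one_lt_ncard (s := S) (by omega) v
    exact ⟨w, Ne.symm hwv, hv, hw⟩

lemma completeOn_edge_ncard {n : ℕ} (S : Set (Fin n)) :
    (completeOn n S).edgeSet.ncard = S.ncard.choose 2 := by
  classical
  have hsupp : (completeOn n S).support ⊆ S := by rintro v ⟨w, _, hv, _⟩; exact hv
  rw [edgeSet_ncard_comap _ S hsupp]
  haveI : Fintype ↥S := Fintype.ofFinite _
  have hcomap : (completeOn n S).comap (Subtype.val : S → Fin n) = ⊤ := by
    ext a b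
    simp only [comap_adj, top_adj, completeOn]
    constructor
    · rintro ⟨h, _, _⟩; exact fun hab => h (congrArg Subtype.val hab)
    · intro h; exact ⟨fun hv => h (Subtype.ext hv), a.2, b.2⟩
  rw [hcomap]
  have h1 : (⊤ : SimpleGraph ↥S).edgeSet.ncard = (⊤ : SimpleGraph ↥S).edgeFinset.card := by
    simp [Set.ncard_eq_toFinset_card', edgeFinset]
  have h2 : (Fintype.card ↥S) = S.ncard := by
    rw [Set.ncard_eq_toFinset_card', Set.toFinset_card]
  rw [h1, card_edgeFinset_top_eq_card_choose_two, h2]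

lemma nat_card_fin (n : ℕ) : Nat.card (Fin n) = n := by simp

lemma step_of_isolated {j n : ℕ} (hn2 : j + 2 ≤ n) {G H : SimpleGraph (Fin n)} {x y : Fin n}
    (hxy : G.Adj x y) (hE : H.edgeSet = G.edgeSet \ {s(x, y)})
    (T : Set (Fin n)) (hT : T.ncard = n - (j + 2)) (hTx : x ∉ T) (hTy : y ∉ T)
    (hTadj : ∀ t ∈ T, ¬G.Adj x t) :
    JEraseStep j G H := by
  refine ⟨s(x, y), (mem_edgeSet G).mpr hxy, hE, Or.inr ⟨{x}, insert y T, ?_, ?_, ?_, ?_⟩⟩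
  · rw [Set.disjoint_left]
    rintro a rfl
    simp only [Set.mem_insert_iff]
    rintro (rfl | haT)
    · exact hxy.ne rfl
    · exact hTx haT
  · rw [Set.ncard_singleton, Set.ncard_insert_of_notMem hTy T.toFinite, hT, nat_card_fin]
    omega
  · exact ⟨x, rfl, y, Set.mem_insert y T, rfl⟩
  · rintro a rfl b hb hab
    rcases hb with rfl | hbT
    · rfl
    · exact absurd hab (hTadj b hbT)

lemma small_erasable {j n : ℕ} (hn : j + 1 ≤ n) :
    ∀ (N : ℕ) (G : SimpleGraph (Fin n)), G.edgeSet.ncard ≤ N →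
      G.support.ncard ≤ j + 2 → JErasable j G := by
  intro N
  induction N with
  | zero =>
    intro G hN _
    have : G.edgeSet = ∅ := by
      rw [← Set.ncard_eq_zero G.edgeSet.toFinite]; omega
    rw [edgeSet_eq_empty.mp this]
    exact jerasable_bot
  | succ N ih =>
    intro G hN hsupp
    by_cases hemp : G.edgeSet = ∅
    · rw [edgeSet_eq_empty.mp hemp]; exact jerasable_bot
    · obtain ⟨e, he⟩ := Set.nonempty_iff_ne_empty.mpr hemp
      revert he
      induction e using Sym2.ind with
      | _ x y =>
        intro he
        have hxy : G.Adj x y := (mem_edgeSet G).mp he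
        have hdel : (G.deleteEdges {s(x, y)}).edgeSet = G.edgeSet \ {s(x, y)} :=
          edgeSet_deleteEdges _
        have hrec : JErasable j (G.deleteEdges {s(x, y)}) := by
          refine ih _ ?_ ?_
          · rw [hdel, Set.ncard_diff_singleton_of_mem he]
            omega
          · exact le_trans (Set.ncard_le_ncard
              (support_mono (deleteEdges_le _)) G.support.toFinite) hsupp
        refine jerasable_cons ?_ hrec
        rcases Nat.lt_or_ge n (j + 2) with hlt | hge
        · exact ⟨s(x, y), he, hdel, Or.inl (by rw [nat_card_fin]; omega)⟩
        · -- pick T ⊆ supportᶜ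
          have hcompl : n - (j + 2) ≤ G.supportᶜ.ncard := by
            have := Set.ncard_add_ncard_compl G.support G.support.toFinite
              G.supportᶜ.toFinite
            rw [nat_card_fin] at this
            omega
          obtain ⟨T, hTsub, hTcard⟩ := Set.exists_subset_card_eq hcompl
          refine step_of_isolated hge hxy hdel T hTcard ?_ ?_ ?_
          · exact fun h => (hTsub h) ⟨y, hxy⟩
          · exact fun h => (hTsub h) ⟨x, hxy.symm⟩
          · exact fun t ht hadj => (hTsub ht) ⟨x, hadj.symm⟩

lemma pad {j n : ℕ} (hn : j + 1 ≤ n) {G : SimpleGraph (Fin n)} (hG : JErasable j G)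
    (hpos : 1 ≤ G.support.ncard) :
    ∀ d, G.support.ncard + d ≤ n →
      ∃ G' : SimpleGraph (Fin n), JErasable j G' ∧
        G'.support.ncard = G.support.ncard + d ∧
        G'.edgeSet.ncard = G.edgeSet.ncard + d := by
  intro d
  induction d with
  | zero => exact fun _ => ⟨G, hG, by simp, by simp⟩
  | succ d ih =>
    intro hle
    obtain ⟨G', hG', hscard, hecard⟩ := ih (by omega)
    have hv : G'.support.Nonempty := by
      rw [← Set.ncard_pos G'.support.toFinite]; omega
    obtain ⟨v, hv⟩ := hv
    have hucompl : G'.supportᶜ.Nonempty := by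
      rw [← Set.ncard_pos G'.supportᶜ.toFinite]
      have := Set.ncard_add_ncard_compl G'.support G'.support.toFinite G'.supportᶜ.toFinite
      rw [nat_card_fin] at this
      omega
    obtain ⟨u, hu⟩ := hucompl
    have huns : u ∉ G'.support := hu
    have huv : u ≠ v := fun h => huns (h ▸ hv)
    set G'' := G' ⊔ fromEdgeSet {s(u, v)} with hG''def
    have hadj : ∀ a b, G''.Adj a b ↔ G'.Adj a b ∨ (s(a, b) = s(u, v) ∧ a ≠ b) := by
      intro a b; simp [hG''def, fromEdgeSet_adj]
    have hE : G''.edgeSet = insert s(u, v) G'.edgeSet := by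
      rw [hG''def, edgeSet_sup, edgeSet_fromEdgeSet, Set.union_comm]
      congr 1
      ext p
      constructor
      · rintro ⟨h, -⟩; exact h
      · rintro rfl
        exact ⟨rfl, by simp [huv]⟩
    have henot : s(u, v) ∉ G'.edgeSet := fun h => huns ⟨v, (mem_edgeSet _).mp h⟩
    have hsupp : G''.support = insert u G'.support := by
      ext a
      simp only [mem_support, Set.mem_insert_iff]
      constructor
      · rintro ⟨b, hab⟩
        rcases (hadj a b).mp hab with h | ⟨heq, hne⟩
        · exact Or.inr ⟨b, h⟩
        · rcases Sym2.eq_iff.mp heq with ⟨rfl, rfl⟩ | ⟨rfl, rfl⟩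
          · exact Or.inl rfl
          · exact Or.inr hv
      · rintro (rfl | ⟨b, hab⟩)
        · exact ⟨v, (hadj a v).mpr (Or.inr ⟨rfl, huv⟩)⟩
        · exact ⟨b, (hadj a b).mpr (Or.inl hab)⟩
    have huvadj : G''.Adj u v := (hadj u v).mpr (Or.inr ⟨rfl, huv⟩)
    have hEdel : G'.edgeSet = G''.edgeSet \ {s(u, v)} := by
      rw [hE, Set.insert_diff_self_of_notMem henot]
    have hstep : JEraseStep j G'' G' := by
      rcases Nat.lt_or_ge n (j + 2) with hlt | hge
      · exact ⟨s(u, v), by rw [hE]; exact Set.mem_insert _ _, hEdel,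
          Or.inl (by rw [nat_card_fin]; omega)⟩
      · have hcard2 : ({u, v} : Set (Fin n)).ncard = 2 := by
          rw [Set.ncard_pair huv]
        have hcompl : n - (j + 2) ≤ ({u, v} : Set (Fin n))ᶜ.ncard := by
          have := Set.ncard_add_ncard_compl ({u, v} : Set (Fin n))
            (Set.toFinite _) (Set.toFinite _)
          rw [nat_card_fin, hcard2] at this
          omega
        obtain ⟨T, hTsub, hTcard⟩ := Set.exists_subset_card_eq hcompl
        refine step_of_isolated hge huvadj hEdel T hTcard ?_ ?_ ?_
        · exact fun h => (hTsub h) (Or.inl rfl)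
        · exact fun h => (hTsub h) (Or.inr rfl)
        · intro t ht hadjt
          rcases (hadj u t).mp hadjt with h | ⟨heq, hne⟩
          · exact huns ⟨t, h⟩
          · rcases Sym2.eq_iff.mp heq with ⟨_, rfl⟩ | ⟨rfl, rfl⟩
            · exact (hTsub ht) (Or.inr rfl)
            · exact (hTsub ht) (Or.inl rfl)
    refine ⟨G'', jerasable_cons hstep hG', ?_, ?_⟩
    · rw [hsupp, Set.ncard_insert_of_notMem huns G'.support.toFinite]; omega
    · rw [hE, Set.ncard_insert_of_notMem henot G'.edgeSet.toFinite]; omega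

lemma support_set_eq {n : ℕ} (G : SimpleGraph (Fin n)) :
    {v : Fin n | ∃ w, G.Adj v w} = G.support := rfl

lemma mem_f_le {j n k : ℕ} {G : SimpleGraph (Fin n)} (hG : JErasable j G)
    (hs : G.support.ncard = k) : G.edgeSet.ncard ≤ maxJErasableEdges j n k := by
  refine le_csSup ⟨n.choose 2, ?_⟩ ⟨G, hG, by rw [support_set_eq]; exact hs, rfl⟩
  rintro m ⟨H, -, -, rfl⟩
  exact edge_bound_n H

lemma f_le {j n k c : ℕ}
    (h : ∀ G : SimpleGraph (Fin n), JErasable j G → G.support.ncard = k →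
      G.edgeSet.ncard ≤ c) : maxJErasableEdges j n k ≤ c := by
  refine csSup_le' ?_
  rintro m ⟨G, hG, hs, rfl⟩
  exact h G hG (by rw [← support_set_eq]; exact hs)

lemma edges_le_f {j n t : ℕ} (hn : j + 1 ≤ n) {G : SimpleGraph (Fin n)}
    (hG : JErasable j G) (ht : G.support.ncard ≤ t) (htn : t ≤ n) :
    G.edgeSet.ncard ≤ maxJErasableEdges j n t := by
  by_cases hemp : G.edgeSet = ∅
  · simp [hemp]
  · have hpos : 1 ≤ G.support.ncard := by
      obtain ⟨e, he⟩ := Set.nonempty_iff_ne_empty.mpr hemp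
      revert he
      induction e using Sym2.ind with
      | _ x y =>
        intro he
        have : x ∈ G.support := ⟨y, (mem_edgeSet G).mp he⟩
        have := Set.ncard_pos G.support.toFinite |>.mpr ⟨x, this⟩
        omega
    obtain ⟨G', hG', hscard, hecard⟩ := pad hn hG hpos (t - G.support.ncard) (by omega)
    have := mem_f_le hG' (k := t) (by omega)
    omega

lemma part1 {j n : ℕ} (hj : 2 ≤ j) (hn : j + 1 ≤ n) :
    ∀ k, j + 1 ≤ k → k ≤ j + 2 → k ≤ n → maxJErasableEdges j n k = k.choose 2 := by
  intro k hk1 hk2 hkn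
  apply le_antisymm
  · refine f_le ?_
    intro G _ hs
    calc G.edgeSet.ncard ≤ G.support.ncard.choose 2 := edge_bound G
    _ = k.choose 2 := by rw [hs]
  · -- lower bound: complete graph on a k-subset
    have hkuniv : k ≤ (Set.univ : Set (Fin n)).ncard := by
      rw [Set.ncard_univ, nat_card_fin]; exact hkn
    obtain ⟨S, -, hScard⟩ := Set.exists_subset_card_eq hkuniv
    have hsupp : (completeOn n S).support = S := completeOn_support (by omega)
    have hG : JErasable j (completeOn n S) :=
      small_erasable hn _ (completeOn n S) le_rfl (by rw [hsupp, hScard]; omega)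
    have := mem_f_le hG (k := k) (by rw [hsupp, hScard])
    rwa [completeOn_edge_ncard, hScard] at this

lemma part2_per_graph {j n k : ℕ} (hj : 2 ≤ j) (hn : j + 1 ≤ n) (hk : j + 3 ≤ k)
    (hkn : k ≤ n) (G : SimpleGraph (Fin n)) (hG : JErasable j G)
    (hs : G.support.ncard = k) :
    ∃ k₁, j + 1 ≤ k₁ ∧ k₁ ≤ k - 1 ∧
      G.edgeSet.ncard ≤
        1 + (maxJErasableEdges j n k₁ + maxJErasableEdges j n (k + j - k₁)) := by
  by_cases hemp : G.edgeSet = ∅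
  · exact ⟨j + 1, le_rfl, by omega, by simp [hemp]⟩
  obtain ⟨m, c, h0, hm, hstep⟩ := hG
  have hGer : JErasable j G := ⟨m, c, h0, hm, hstep⟩
  have hm0 : m ≠ 0 := by
    rintro rfl
    rw [h0] at hm
    exact hemp (by rw [hm]; exact edgeSet_bot)
  obtain ⟨e, he, -, hside⟩ := hstep 0 (by omega)
  rw [h0] at he hside
  rcases hside with hcard | ⟨V1, V2, hdisj, hcard, ⟨x, hx, y, hy, rfl⟩, huniq⟩
  · rw [nat_card_fin] at hcard; omega
  have hxy : G.Adj x y := (mem_edgeSet G).mp he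
  set G1 : SimpleGraph (Fin n) :=
    ⟨fun a b => G.Adj a b ∧ a ∉ V2 ∧ b ∉ V2,
      ⟨fun a b ⟨h, ha, hb⟩ => ⟨h.symm, hb, ha⟩⟩,
      ⟨fun a ⟨h, _, _⟩ => G.loopless.irrefl a h⟩⟩ with hG1def
  set G2 : SimpleGraph (Fin n) :=
    ⟨fun a b => G.Adj a b ∧ s(a, b) ≠ s(x, y) ∧ (a ∈ V2 ∨ b ∈ V2),
      ⟨fun a b ⟨h, hne, hmm⟩ => ⟨h.symm, fun hc => hne (Sym2.eq_swap.trans hc), hmm.symm⟩⟩,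
      ⟨fun a ⟨h, _, _⟩ => G.loopless.irrefl a h⟩⟩ with hG2def
  have hG1le : G1 ≤ G := by intro a b h; exact h.1
  have hG2le : G2 ≤ G := by intro a b h; exact h.1
  have hxV2 : x ∉ V2 := fun h => Set.disjoint_left.mp hdisj hx h
  have hEpart : G.edgeSet = (G1.edgeSet ∪ G2.edgeSet) ∪ {s(x, y)} := by
    ext p
    induction p using Sym2.ind with
    | _ a b =>
      simp only [Set.mem_union, Set.mem_singleton_iff, mem_edgeSet]
      constructor
      · intro h
        by_cases heq : s(a, b) = s(x, y)
        · exact Or.inr heq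
        by_cases hmm : a ∈ V2 ∨ b ∈ V2
        · exact Or.inl (Or.inr ⟨h, heq, hmm⟩)
        · push_neg at hmm
          exact Or.inl (Or.inl ⟨h, hmm.1, hmm.2⟩)
      · rintro ((⟨h, -, -⟩ | ⟨h, -, -⟩) | heq)
        · exact h
        · exact h
        · rw [← mem_edgeSet, heq]; exact he
  have hd12 : Disjoint G1.edgeSet G2.edgeSet := by
    rw [Set.disjoint_left]
    intro p
    induction p using Sym2.ind with
    | _ a b =>
      rintro h1 h2
      obtain ⟨-, ha, hb⟩ := (mem_edgeSet G1).mp h1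
      obtain ⟨-, -, hmm⟩ := (mem_edgeSet G2).mp h2
      rcases hmm with h | h
      · exact ha h
      · exact hb h
  have hde : s(x, y) ∉ G1.edgeSet ∪ G2.edgeSet := by
    rintro (h | h)
    · exact ((mem_edgeSet G1).mp h).2.2 hy
    · exact ((mem_edgeSet G2).mp h).2.1 rfl
  have hcount : G.edgeSet.ncard = G1.edgeSet.ncard + G2.edgeSet.ncard + 1 := by
    rw [hEpart, Set.ncard_union_eq (Set.disjoint_singleton_right.mpr hde)
        ((G1.edgeSet ∪ G2.edgeSet).toFinite) (Set.finite_singleton _),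
      Set.ncard_union_eq hd12 G1.edgeSet.toFinite G2.edgeSet.toFinite,
      Set.ncard_singleton]
  have hxS : x ∈ G.support := ⟨y, hxy⟩
  have hyS : y ∈ G.support := ⟨x, hxy.symm⟩
  have hns1 : ∀ v, v ∈ G1.support → v ∉ V2 := by
    rintro v ⟨w, -, hv, -⟩; exact hv
  have hns2 : ∀ v, v ∈ G2.support → v ∉ V1 := by
    rintro v ⟨w, h, hne, hmm⟩ hv1
    have hvV2 : v ∉ V2 := fun h' => Set.disjoint_left.mp hdisj hv1 h'
    have hwV2 : w ∈ V2 := by tauto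
    exact hne (huniq v hv1 w hwV2 h)
  have hsub1 : G1.support ⊆ G.support \ {y} := by
    rintro v ⟨w, hadj⟩
    refine ⟨⟨w, hadj.1⟩, fun hvy => ?_⟩
    rw [Set.mem_singleton_iff] at hvy
    subst hvy
    exact hadj.2.1 hy
  have hsub2 : G2.support ⊆ G.support \ {x} := by
    rintro v ⟨w, hadj⟩
    refine ⟨⟨w, hadj.1⟩, fun hvx => ?_⟩
    rw [Set.mem_singleton_iff] at hvx
    subst hvx
    exact hns2 v ⟨w, hadj⟩ hx
  have hdiffy : (G.support \ {y}).ncard = k - 1 := by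
    rw [Set.ncard_diff_singleton_of_mem hyS, hs]
  have hdiffx : (G.support \ {x}).ncard = k - 1 := by
    rw [Set.ncard_diff_singleton_of_mem hxS, hs]
  have ha : G1.support.ncard ≤ k - 1 := by
    rw [← hdiffy]
    exact Set.ncard_le_ncard hsub1 (Set.toFinite _)
  have hb : G2.support.ncard ≤ k - 1 := by
    rw [← hdiffx]
    exact Set.ncard_le_ncard hsub2 (Set.toFinite _)
  have hWcard : (V1ᶜ ∩ V2ᶜ).ncard = j := by
    have h1 : V1ᶜ ∩ V2ᶜ = (V1 ∪ V2)ᶜ := (Set.compl_union V1 V2).symm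
    have h2 : (V1 ∪ V2).ncard = V1.ncard + V2.ncard :=
      Set.ncard_union_eq hdisj V1.toFinite V2.toFinite
    have h3 := Set.ncard_add_ncard_compl (V1 ∪ V2) (Set.toFinite _) (Set.toFinite _)
    rw [nat_card_fin] at h3 hcard
    rw [h1]
    omega
  have hab : G1.support.ncard + G2.support.ncard ≤ k + j := by
    have hun : (G1.support ∪ G2.support).ncard ≤ k := by
      rw [← hs]
      refine Set.ncard_le_ncard ?_ G.support.toFinite
      rintro v (hv | hv)
      · exact (hsub1 hv).1
      · exact (hsub2 hv).1
    have hint : (G1.support ∩ G2.support).ncard ≤ j := by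
      rw [← hWcard]
      refine Set.ncard_le_ncard ?_ (Set.toFinite _)
      rintro v ⟨h1, h2⟩
      exact ⟨hns2 v h2, hns1 v h1⟩
    have := Set.ncard_union_add_ncard_inter G1.support G2.support
      (Set.toFinite _) (Set.toFinite _)
    omega
  set k₁ := max (j + 1) G1.support.ncard with hk₁def
  have hk₁a : G1.support.ncard ≤ k₁ := le_max_right _ _
  have hk₁1 : j + 1 ≤ k₁ := le_max_left _ _
  have hk₁2 : k₁ ≤ k - 1 := max_le (by omega) ha
  have hk₂b : G2.support.ncard ≤ k + j - k₁ := by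
    rcases le_total (j + 1) G1.support.ncard with h | h
    · have : k₁ = G1.support.ncard := max_eq_right h
      omega
    · have : k₁ = j + 1 := max_eq_left h
      omega
  have hE1 : G1.edgeSet.ncard ≤ maxJErasableEdges j n k₁ :=
    edges_le_f hn (JErasable.mono hG1le hGer) hk₁a (by omega)
  have hE2 : G2.edgeSet.ncard ≤ maxJErasableEdges j n (k + j - k₁) :=
    edges_le_f hn (JErasable.mono hG2le hGer) hk₂b (by omega)
  exact ⟨k₁, hk₁1, hk₁2, by omega⟩

/-- (1) `f_j(k) = C(k,2)` for `j+1 ≤ k ≤ j+2`; (2) for `k ≥ j+3`,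
`f_j(k) ≤ 1 + max (f_j(k₁) + f_j(k₂))` over `j+1 ≤ k₁, k₂ ≤ k−1` with
`k₁ + k₂ = k + j`. -/
theorem maxJErasableEdges_bounds (j n : ℕ) (hj : 2 ≤ j) (hn : j + 1 ≤ n) :
    (∀ k, j + 1 ≤ k → k ≤ j + 2 → k ≤ n → maxJErasableEdges j n k = k.choose 2) ∧
    (∀ k, j + 3 ≤ k → k ≤ n →
      ∃ k₁ k₂, j + 1 ≤ k₁ ∧ j + 1 ≤ k₂ ∧ k₁ ≤ k - 1 ∧ k₂ ≤ k - 1 ∧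
        k₁ + k₂ = k + j ∧
        maxJErasableEdges j n k ≤
          1 + (maxJErasableEdges j n k₁ + maxJErasableEdges j n k₂)) := by
  constructor
  · exact part1 hj hn
  · intro k hk hkn
    have hne : (Finset.Icc (j + 1) (k - 1)).Nonempty :=
      ⟨j + 1, Finset.mem_Icc.mpr ⟨le_rfl, by omega⟩⟩
    obtain ⟨k₁, hk₁mem, hmax⟩ := Finset.exists_max_image (Finset.Icc (j + 1) (k - 1))
      (fun t => maxJErasableEdges j n t + maxJErasableEdges j n (k + j - t)) hne
    rw [Finset.mem_Icc] at hk₁mem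
    refine ⟨k₁, k + j - k₁, hk₁mem.1, by omega, hk₁mem.2, by omega, by omega, ?_⟩
    refine f_le ?_
    intro G hG hs
    obtain ⟨t, ht1, ht2, hle⟩ := part2_per_graph hj hn hk hkn G hG hs
    have := hmax t (Finset.mem_Icc.mpr ⟨ht1, ht2⟩)
    omega
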